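/- In ℚ[[z]] one has the product identity (1 − 729·z) · I_{0,0} · I_{1,1} · I_{2,2} · I_{3,3} · I_{4,4} = 1, i.e. I_{0,0}·I_{1,1}·I_{2,2}·I_{3,3}·I_{4,4} = (1 − 3⁶·z)^{−1}. -/

import Mathlib

/-- `A_d(w) = (∏_{r=1}^{3d} (3w+r))² · ((∏_{r=1}^{d} (w+r))⁶)⁻¹ ∈ ℚ[[w]]`. -/
noncomputable def Acoef (d : ℕ) : PowerSeries ℚ :=
  (∏ r ∈ Finset.Icc 1 (3 * d), (3 * PowerSeries.X + (r : PowerSeries ℚ))) ^ 2 *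
    ((∏ r ∈ Finset.Icc 1 d, (PowerSeries.X + (r : PowerSeries ℚ))) ^ 6)⁻¹

/-- `Ĩ_q ∈ ℚ[[z]]`: the coefficient of `z^d` is the coefficient of `w^q` in `A_d(w)`. -/
noncomputable def Itil (q : ℕ) : PowerSeries ℚ :=
  PowerSeries.mk fun d => PowerSeries.coeff q (Acoef d)

/-- `S = (ℚ[[z]])[t]`. -/
abbrev S : Type := Polynomial (PowerSeries ℚ)

/-- The operator `z·∂/∂z` on `ℚ[[z]]`. -/
noncomputable def zdz (f : PowerSeries ℚ) : PowerSeries ℚ :=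
  PowerSeries.mk fun n => (n : ℚ) * PowerSeries.coeff n f

/-- The derivation `δ = ∂/∂t + z·∂/∂z` on `S = (ℚ[[z]])[t]`, determined by
`δ(t) = 1` and `δ(z) = z`. -/
noncomputable def deltaOp (p : S) : S :=
  Polynomial.derivative p + p.sum fun n a => Polynomial.C (zdz a) * Polynomial.X ^ n

/-- `I_{0,q} = Σ_{k=0}^{q} (t^k/k!)·Ĩ_{q−k} ∈ S`. -/
noncomputable def I0S (q : ℕ) : S :=
  ∑ k ∈ Finset.range (q + 1),
    Polynomial.C (PowerSeries.C (1 / (k.factorial : ℚ)) * Itil (q - k)) * Polynomial.X ^ k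

/-- The recursion `I_{p,q} = δ(I_{p−1,q} · I_{p−1,p−1}⁻¹)`, where the inverse of the
(constant, unit) polynomial `I_{p−1,p−1}` is taken via the power series inverse of its
constant coefficient. -/
noncomputable def IPQ : ℕ → ℕ → S
  | 0 => I0S
  | p + 1 => fun q => deltaOp (IPQ p q * Polynomial.C (((IPQ p p).coeff 0)⁻¹))


open PowerSeries Polynomial

lemma zdz_coeff (f : PowerSeries ℚ) (n : ℕ) : coeff n (zdz f) = n * coeff n f := by
  simp [zdz]

lemma zdz_add (f g : PowerSeries ℚ) : zdz (f + g) = zdz f + zdz g := by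
  ext n; simp [zdz_coeff, mul_add]

lemma zdz_zero : zdz 0 = 0 := by ext n; simp [zdz_coeff]

lemma zdz_mul (f g : PowerSeries ℚ) : zdz (f * g) = zdz f * g + f * zdz g := by
  ext n
  simp only [zdz_coeff, map_add, PowerSeries.coeff_mul, Finset.mul_sum, ← Finset.sum_add_distrib]
  apply Finset.sum_congr rfl
  intro p hp
  rw [Finset.HasAntidiagonal.mem_antidiagonal] at hp
  rw [← hp]
  push_cast
  ring

lemma zdz_C (c : ℚ) : zdz (PowerSeries.C c) = 0 := by
  ext n
  simp [zdz_coeff, PowerSeries.coeff_C]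
  intro h; simp [h]

lemma zdz_one : zdz 1 = 0 := by
  rw [← map_one (PowerSeries.C), zdz_C]

lemma zdz_constantCoeff (f : PowerSeries ℚ) : PowerSeries.constantCoeff (zdz f) = 0 := by
  rw [← PowerSeries.coeff_zero_eq_constantCoeff, zdz_coeff]; simp

lemma zdz_Cmul (c : ℚ) (f : PowerSeries ℚ) :
    zdz (PowerSeries.C c * f) = PowerSeries.C c * zdz f := by
  rw [zdz_mul, zdz_C]; ring

noncomputable def mapZ (p : Polynomial (PowerSeries ℚ)) : Polynomial (PowerSeries ℚ) :=
  p.sum fun n a => Polynomial.C (zdz a) * Polynomial.X ^ n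

lemma mapZ_coeff (p : Polynomial (PowerSeries ℚ)) (n : ℕ) :
    (mapZ p).coeff n = zdz (p.coeff n) := by
  rw [mapZ, Polynomial.coeff_sum]
  simp only [Polynomial.coeff_C_mul, Polynomial.coeff_X_pow]
  rw [Polynomial.sum_def]
  by_cases h : n ∈ p.support
  · rw [Finset.sum_eq_single n]
    · simp
    · intro b _ hb; simp [Ne.symm hb]
    · intro hn; exact absurd h hn
  · rw [Finset.sum_eq_zero]
    · have : p.coeff n = 0 := Polynomial.notMem_support_iff.mp h
      rw [this, zdz_zero]
    · intro b hb
      have hnb : n ≠ b := by rintro rfl; exact absurd hb h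
      simp [hnb]

lemma mapZ_add (p q : Polynomial (PowerSeries ℚ)) : mapZ (p + q) = mapZ p + mapZ q := by
  ext n; simp [mapZ_coeff, zdz_add]

lemma zdz_sum {α : Type} (s : Finset α) (f : α → PowerSeries ℚ) :
    zdz (∑ i ∈ s, f i) = ∑ i ∈ s, zdz (f i) := by
  induction s using Finset.cons_induction with
  | empty => simp [zdz_zero]
  | cons a s ha ih => rw [Finset.sum_cons, Finset.sum_cons, zdz_add, ih]

lemma mapZ_mul (p q : Polynomial (PowerSeries ℚ)) :
    mapZ (p * q) = mapZ p * q + p * mapZ q := by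
  refine Polynomial.ext fun n => ?_
  simp only [mapZ_coeff, Polynomial.coeff_add, Polynomial.coeff_mul]
  rw [zdz_sum, ← Finset.sum_add_distrib]
  apply Finset.sum_congr rfl
  intro x _
  rw [zdz_mul]

lemma deltaOp_eq (p : Polynomial (PowerSeries ℚ)) :
    deltaOp p = Polynomial.derivative p + mapZ p := rfl

lemma deltaOp_add (p q : Polynomial (PowerSeries ℚ)) :
    deltaOp (p + q) = deltaOp p + deltaOp q := by
  simp only [deltaOp_eq, map_add, mapZ_add]; ring

lemma deltaOp_zero : deltaOp 0 = 0 := by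
  have : (0 : Polynomial (PowerSeries ℚ)) = 0 + 0 := by ring
  simp only [deltaOp_eq, map_zero]
  rw [show mapZ 0 = 0 from by ext n; simp [mapZ_coeff, zdz_zero]]
  ring

lemma deltaOp_mul (p q : Polynomial (PowerSeries ℚ)) :
    deltaOp (p * q) = deltaOp p * q + p * deltaOp q := by
  simp only [deltaOp_eq, Polynomial.derivative_mul, mapZ_mul]; ring

lemma deltaOp_C (a : PowerSeries ℚ) :
    deltaOp (Polynomial.C a) = Polynomial.C (zdz a) := by
  simp only [deltaOp_eq, Polynomial.derivative_C]
  ext n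
  rw [Polynomial.coeff_add, mapZ_coeff]
  by_cases h : n = 0
  · subst h; simp
  · simp [Polynomial.coeff_C, h, zdz_zero]

lemma deltaOp_one : deltaOp 1 = 0 := by
  rw [← Polynomial.C_1, deltaOp_C, zdz_one, Polynomial.C_0]

lemma deltaOp_Cmul (a : PowerSeries ℚ) (u : Polynomial (PowerSeries ℚ)) :
    deltaOp (Polynomial.C a * u) = Polynomial.C (zdz a) * u + Polynomial.C a * deltaOp u := by
  rw [deltaOp_mul, deltaOp_C]

lemma deltaOp_CmulXpow (a : PowerSeries ℚ) (k : ℕ) :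
    deltaOp (Polynomial.C a * Polynomial.X ^ k)
      = Polynomial.C (zdz a) * Polynomial.X ^ k
        + (k : Polynomial (PowerSeries ℚ)) * Polynomial.C a * Polynomial.X ^ (k - 1) := by
  rw [deltaOp_Cmul]
  congr 1
  have hX : deltaOp (Polynomial.X ^ k : Polynomial (PowerSeries ℚ))
      = (k : Polynomial (PowerSeries ℚ)) * Polynomial.X ^ (k - 1) := by
    rw [deltaOp_eq, Polynomial.derivative_X_pow]
    rw [show mapZ (Polynomial.X ^ k : Polynomial (PowerSeries ℚ)) = 0 from ?_]
    · simp [mul_comm]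
    · ext n
      rw [mapZ_coeff, Polynomial.coeff_X_pow]
      by_cases h : n = k <;> simp [h, zdz_one, zdz_zero]
  rw [hX]; ring

open Polynomial

noncomputable def act (P : Polynomial (PowerSeries ℚ)) (f : Polynomial (PowerSeries ℚ)) :
    Polynomial (PowerSeries ℚ) :=
  P.sum fun j a => Polynomial.C a * (deltaOp^[j] f)

lemma act_monomial (j : ℕ) (a : PowerSeries ℚ) (f : Polynomial (PowerSeries ℚ)) :
    act (monomial j a) f = Polynomial.C a * (deltaOp^[j] f) := by
  rw [act, Polynomial.sum_monomial_index]
  simp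

lemma act_zeroP (f : Polynomial (PowerSeries ℚ)) : act 0 f = 0 := by
  simp [act, Polynomial.sum_zero_index]

lemma act_add (P Q f : Polynomial (PowerSeries ℚ)) : act (P + Q) f = act P f + act Q f := by
  rw [act, act, act, Polynomial.sum_add_index]
  · intro i; simp
  · intro i b c; rw [map_add, add_mul]

lemma act_C (a : PowerSeries ℚ) (f : Polynomial (PowerSeries ℚ)) :
    act (Polynomial.C a) f = Polynomial.C a * f := by
  rw [← Polynomial.monomial_zero_left, act_monomial]
  simp

lemma act_one (f : Polynomial (PowerSeries ℚ)) : act 1 f = f := by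
  rw [← Polynomial.C_1, act_C, Polynomial.C_1, one_mul]

lemma act_Cmul (a : PowerSeries ℚ) (P f : Polynomial (PowerSeries ℚ)) :
    act (Polynomial.C a * P) f = Polynomial.C a * act P f := by
  induction P using Polynomial.induction_on' with
  | add p q hp hq => rw [mul_add, act_add, act_add, hp, hq, mul_add]
  | monomial n b =>
    rw [Polynomial.C_mul_monomial, act_monomial, act_monomial, map_mul, mul_assoc]

lemma act_neg (P f : Polynomial (PowerSeries ℚ)) : act (-P) f = - act P f := by
  have h : (-P) = Polynomial.C (-1) * P := by
    rw [map_neg, Polynomial.C_1]; ring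
  rw [h, act_Cmul, map_neg, Polynomial.C_1]; ring

lemma act_sub (P Q f : Polynomial (PowerSeries ℚ)) : act (P - Q) f = act P f - act Q f := by
  rw [sub_eq_add_neg, act_add, act_neg, sub_eq_add_neg]

lemma act_mulX (P f : Polynomial (PowerSeries ℚ)) :
    act (P * Polynomial.X) f = act P (deltaOp f) := by
  induction P using Polynomial.induction_on' with
  | add p q hp hq => rw [add_mul, act_add, hp, hq, act_add]
  | monomial n b =>
    rw [Polynomial.monomial_mul_X, act_monomial, act_monomial,
      Function.iterate_succ_apply]

lemma deltaOp_iterate_one : ∀ j, j ≠ 0 → deltaOp^[j] (1 : Polynomial (PowerSeries ℚ)) = 0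
  | 0, h => absurd rfl h
  | 1, _ => by simp [deltaOp_one]
  | (j+2), _ => by
      rw [Function.iterate_succ_apply, deltaOp_one]
      have : ∀ i, deltaOp^[i] (0 : Polynomial (PowerSeries ℚ)) = 0 := by
        intro i
        induction i with
        | zero => rfl
        | succ i ih => rw [Function.iterate_succ_apply, deltaOp_zero, ih]
      exact this (j+1)

lemma deltaOp_iterate_zero (i : ℕ) : deltaOp^[i] (0 : Polynomial (PowerSeries ℚ)) = 0 := by
  induction i with
  | zero => rfl
  | succ i ih => rw [Function.iterate_succ_apply, deltaOp_zero, ih]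

lemma act_at_one (P : Polynomial (PowerSeries ℚ)) : act P 1 = Polynomial.C (P.coeff 0) := by
  induction P using Polynomial.induction_on' with
  | add p q hp hq => rw [act_add, hp, hq, Polynomial.coeff_add, map_add]
  | monomial n b =>
    rw [act_monomial, Polynomial.coeff_monomial]
    by_cases h : n = 0
    · subst h; simp
    · rw [deltaOp_iterate_one n h, if_neg h, map_zero, mul_zero]

lemma delta_act (P f : Polynomial (PowerSeries ℚ)) :
    deltaOp (act P f) = act (mapZ P) f + act (P * Polynomial.X) f := by
  induction P using Polynomial.induction_on' with
  | add p q hp hq =>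
    rw [act_add, deltaOp_add, hp, hq, mapZ_add, act_add, add_mul, act_add]; ring
  | monomial n b =>
    have hm : mapZ (monomial n b) = Polynomial.monomial n (zdz b) := by
      refine Polynomial.ext fun k => ?_
      rw [mapZ_coeff, Polynomial.coeff_monomial, Polynomial.coeff_monomial]
      by_cases h : k = n
      · simp [h]
      · rw [if_neg (Ne.symm h), if_neg (Ne.symm h), zdz_zero]
    rw [act_monomial, deltaOp_Cmul, hm, act_monomial, Polynomial.monomial_mul_X, act_monomial,
      Function.iterate_succ_apply']

def shiftFun (v : ℕ → PowerSeries ℚ) : ℕ → PowerSeries ℚ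
  | 0 => 0
  | (m+1) => v m

noncomputable def Tv (v : ℕ → PowerSeries ℚ) : ℕ → PowerSeries ℚ :=
  fun m => zdz (v m) + shiftFun v m

noncomputable def Jpoly (v : ℕ → PowerSeries ℚ) (q : ℕ) : Polynomial (PowerSeries ℚ) :=
  ∑ k ∈ Finset.range (q + 1),
    Polynomial.C (PowerSeries.C (1 / (k.factorial : ℚ)) * v (q - k)) * Polynomial.X ^ k

lemma deltaOp_sum {α : Type} (s : Finset α) (f : α → Polynomial (PowerSeries ℚ)) :
    deltaOp (∑ i ∈ s, f i) = ∑ i ∈ s, deltaOp (f i) := by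
  induction s using Finset.cons_induction with
  | empty => simp [deltaOp_zero]
  | cons a s ha ih => rw [Finset.sum_cons, Finset.sum_cons, deltaOp_add, ih]

lemma fact_scalar (k : ℕ) : ((k+1 : ℕ) : ℚ) * (1 / ((k+1).factorial : ℚ)) =
    1 / (k.factorial : ℚ) := by
  rw [Nat.factorial_succ]
  have h1 : ((k+1 : ℕ) : ℚ) ≠ 0 := by positivity
  have h2 : ((k.factorial : ℕ) : ℚ) ≠ 0 := by
    exact_mod_cast Nat.cast_ne_zero.mpr (Nat.factorial_ne_zero k)
  push_cast
  field_simp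

lemma J1 (v : ℕ → PowerSeries ℚ) (q : ℕ) :
    deltaOp (Jpoly v q) = Jpoly (Tv v) q := by
  rw [Jpoly, deltaOp_sum]
  have hterm : ∀ k, deltaOp (Polynomial.C (PowerSeries.C (1 / (k.factorial : ℚ)) * v (q - k))
      * Polynomial.X ^ k)
      = Polynomial.C (PowerSeries.C (1 / (k.factorial : ℚ)) * zdz (v (q - k)))
          * Polynomial.X ^ k
        + (k : Polynomial (PowerSeries ℚ))
          * Polynomial.C (PowerSeries.C (1 / (k.factorial : ℚ)) * v (q - k))
          * Polynomial.X ^ (k - 1) := by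
    intro k
    rw [deltaOp_CmulXpow, zdz_Cmul]
  simp only [hterm]
  rw [Finset.sum_add_distrib]
  have hRHS : Jpoly (Tv v) q
      = (∑ k ∈ Finset.range (q + 1),
          Polynomial.C (PowerSeries.C (1 / (k.factorial : ℚ)) * zdz (v (q - k)))
            * Polynomial.X ^ k)
        + ∑ k ∈ Finset.range (q + 1),
          Polynomial.C (PowerSeries.C (1 / (k.factorial : ℚ)) * shiftFun v (q - k))
            * Polynomial.X ^ k := by
    rw [Jpoly, ← Finset.sum_add_distrib]
    apply Finset.sum_congr rfl
    intro k _
    rw [Tv, mul_add, map_add, add_mul]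
  rw [hRHS]
  congr 1
  rw [Finset.sum_range_succ']
  rw [Finset.sum_range_succ]
  have htop : Polynomial.C (PowerSeries.C (1 / (q.factorial : ℚ)) * shiftFun v (q - q))
      * Polynomial.X ^ q = 0 := by
    simp [shiftFun]
  rw [htop, add_zero]
  have hzero : ((0 : ℕ) : Polynomial (PowerSeries ℚ))
      * Polynomial.C (PowerSeries.C (1 / (Nat.factorial 0 : ℚ)) * v (q - 0))
      * Polynomial.X ^ (0 - 1) = 0 := by
    simp
  rw [hzero, add_zero]
  apply Finset.sum_congr rfl
  intro k hk
  rw [Finset.mem_range] at hk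
  have h1 : q - k - 1 + 1 = q - k := by omega
  have h2 : q - (k+1) = q - k - 1 := by omega
  have h3 : shiftFun v (q - k) = v (q - k - 1) := by rw [← h1]; rfl
  rw [h3, h2]
  have h4 : ((k+1 : ℕ) : Polynomial (PowerSeries ℚ))
      * Polynomial.C (PowerSeries.C (1 / ((k+1).factorial : ℚ)) * v (q - k - 1))
      = Polynomial.C (PowerSeries.C (1 / (k.factorial : ℚ)) * v (q - k - 1)) := by
    rw [← Polynomial.C_eq_natCast, ← map_mul]
    congr 1
    rw [show ((k+1 : ℕ) : PowerSeries ℚ) = PowerSeries.C ((k+1 : ℕ) : ℚ) from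
      (map_natCast (PowerSeries.C) (k+1)).symm]
    rw [← mul_assoc, ← map_mul, fact_scalar]
  rw [show (k + 1 : ℕ) - 1 = k from rfl]
  push_cast at h4 ⊢
  rw [h4]

lemma J1_iter (v : ℕ → PowerSeries ℚ) (q j : ℕ) :
    deltaOp^[j] (Jpoly v q) = Jpoly (Tv^[j] v) q := by
  induction j generalizing v with
  | zero => rfl
  | succ j ih =>
    rw [Function.iterate_succ_apply, Function.iterate_succ_apply, J1, ih]

lemma J2 (g : PowerSeries ℚ) (v : ℕ → PowerSeries ℚ) (q : ℕ) :
    Polynomial.C g * Jpoly v q = Jpoly (fun m => g * v m) q := by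
  rw [Jpoly, Jpoly, Finset.mul_sum]
  apply Finset.sum_congr rfl
  intro k _
  rw [← mul_assoc, ← map_mul]
  congr 2
  ring

lemma Jadd (v w : ℕ → PowerSeries ℚ) (q : ℕ) :
    Jpoly v q + Jpoly w q = Jpoly (fun m => v m + w m) q := by
  rw [Jpoly, Jpoly, Jpoly, ← Finset.sum_add_distrib]
  apply Finset.sum_congr rfl
  intro k _
  rw [← add_mul, ← map_add, mul_add]

lemma Jsub (v w : ℕ → PowerSeries ℚ) (q : ℕ) :
    Jpoly v q - Jpoly w q = Jpoly (fun m => v m - w m) q := by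
  rw [Jpoly, Jpoly, Jpoly, ← Finset.sum_sub_distrib]
  apply Finset.sum_congr rfl
  intro k _
  rw [← sub_mul, ← map_sub, mul_sub]

lemma Jdrop (w : ℕ → PowerSeries ℚ) (n : ℕ) (h0 : w 0 = 0) :
    Jpoly w (n + 1) = Jpoly (fun m => w (m + 1)) n := by
  rw [Jpoly, Jpoly, Finset.sum_range_succ]
  have htop : Polynomial.C (PowerSeries.C (1 / ((n+1).factorial : ℚ)) * w (n + 1 - (n+1)))
      * Polynomial.X ^ (n+1) = 0 := by
    rw [Nat.sub_self, h0, mul_zero, map_zero, zero_mul]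
  rw [htop, add_zero]
  apply Finset.sum_congr rfl
  intro k hk
  rw [Finset.mem_range] at hk
  have h1 : n + 1 - k = (n - k) + 1 := by omega
  rw [h1]

noncomputable def eInd : ℕ → PowerSeries ℚ := fun m => if m = 4 then 1 else 0

lemma JeInd_le3 (q : ℕ) (hq : q ≤ 3) : Jpoly eInd q = 0 := by
  rw [Jpoly]
  apply Finset.sum_eq_zero
  intro k _
  have : eInd (q - k) = 0 := by
    rw [eInd, if_neg]; omega
  rw [this, mul_zero, map_zero, zero_mul]

lemma JeInd_4 : Jpoly eInd 4 = 1 := by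
  rw [Jpoly]
  rw [Finset.sum_eq_single 0]
  · norm_num [eInd]
  · intro k _ hk
    have : eInd (4 - k) = 0 := by
      rw [eInd, if_neg]
      omega
    rw [this, mul_zero, map_zero, zero_mul]
  · intro h; simp at h

lemma constCoeff_den (d : ℕ) :
    PowerSeries.constantCoeff (∏ r ∈ Finset.Icc 1 d, (PowerSeries.X + (r : PowerSeries ℚ)))
      ≠ 0 := by
  rw [map_prod, Finset.prod_ne_zero_iff]
  intro r hr
  rw [Finset.mem_Icc] at hr
  have : (PowerSeries.constantCoeff) (PowerSeries.X + (r : PowerSeries ℚ)) = (r : ℚ) := by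
    rw [map_add, PowerSeries.constantCoeff_X, map_natCast, zero_add]
  rw [this]
  exact_mod_cast Nat.cast_ne_zero.mpr (by omega)

lemma den_ne_zero (d : ℕ) :
    (∏ r ∈ Finset.Icc 1 d, (PowerSeries.X + (r : PowerSeries ℚ))) ≠ 0 := by
  intro h
  exact constCoeff_den d (by rw [h, map_zero])

lemma den_inv_cancel (d : ℕ) :
    ((∏ r ∈ Finset.Icc 1 d, (PowerSeries.X + (r : PowerSeries ℚ))) ^ 6)
      * (((∏ r ∈ Finset.Icc 1 d, (PowerSeries.X + (r : PowerSeries ℚ))) ^ 6))⁻¹ = 1 := by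
  apply PowerSeries.mul_inv_cancel
  rw [map_pow]
  exact pow_ne_zero 6 (constCoeff_den d)

lemma Acoef_zero : Acoef 0 = 1 := by
  rw [Acoef]
  simp

lemma ringaux {R : Type*} [CommRing R] (N B1 B2 E Dn iDE iD : R)
    (hc1 : (Dn*E)^6 * iDE = 1) (hc0 : Dn^6 * iD = 1) (hne : (Dn*E)^6 ≠ 0)
    (hcan : ∀ a b : R, a * (Dn*E)^6 = b * (Dn*E)^6 → a = b) :
    E^4 * ((N*B1*B2*(3*E))^2 * iDE) = 9*B1^2*B2^2*(N^2*iD) := by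
  apply hcan
  calc E^4 * ((N*B1*B2*(3*E))^2 * iDE) * (Dn*E)^6
      = E^4 * (N*B1*B2*(3*E))^2 * ((Dn*E)^6 * iDE) := by ring
    _ = E^4 * (N*B1*B2*(3*E))^2 := by rw [hc1, mul_one]
    _ = 9*B1^2*B2^2*N^2*E^6 * (Dn^6 * iD) := by rw [hc0]; ring
    _ = 9*B1^2*B2^2*(N^2*iD) * (Dn*E)^6 := by ring

lemma Acoef_rec (d : ℕ) :
    (PowerSeries.X + ((d+1 : ℕ) : PowerSeries ℚ))^4 * Acoef (d+1)
    = 9 * (3*PowerSeries.X + ((3*d+1 : ℕ) : PowerSeries ℚ))^2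
        * (3*PowerSeries.X + ((3*d+2 : ℕ) : PowerSeries ℚ))^2 * Acoef d := by
  have hnum : (∏ r ∈ Finset.Icc 1 (3*(d+1)), (3*PowerSeries.X + (r : PowerSeries ℚ)))
      = (∏ r ∈ Finset.Icc 1 (3*d), (3*PowerSeries.X + (r : PowerSeries ℚ)))
        * (3*PowerSeries.X + ((3*d+1 : ℕ) : PowerSeries ℚ))
        * (3*PowerSeries.X + ((3*d+2 : ℕ) : PowerSeries ℚ))
        * (3*PowerSeries.X + ((3*d+3 : ℕ) : PowerSeries ℚ)) := by
    rw [show 3*(d+1) = (3*d+2)+1 from by omega,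
      Finset.prod_Icc_succ_top (by omega),
      show 3*d+2 = (3*d+1)+1 from rfl,
      Finset.prod_Icc_succ_top (by omega),
      show 3*d+1 = (3*d)+1 from rfl,
      Finset.prod_Icc_succ_top (by omega)]
  have hden : (∏ r ∈ Finset.Icc 1 (d+1), (PowerSeries.X + (r : PowerSeries ℚ)))
      = (∏ r ∈ Finset.Icc 1 d, (PowerSeries.X + (r : PowerSeries ℚ)))
        * (PowerSeries.X + ((d+1 : ℕ) : PowerSeries ℚ)) := by
    rw [Finset.prod_Icc_succ_top (by omega)]
  set N := ∏ r ∈ Finset.Icc 1 (3*d), (3*PowerSeries.X + (r : PowerSeries ℚ)) with hNdef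
  set Dn := ∏ r ∈ Finset.Icc 1 d, (PowerSeries.X + (r : PowerSeries ℚ)) with hDdef
  set B1 := 3*PowerSeries.X + ((3*d+1 : ℕ) : PowerSeries ℚ)
  set B2 := 3*PowerSeries.X + ((3*d+2 : ℕ) : PowerSeries ℚ)
  set B3 := 3*PowerSeries.X + ((3*d+3 : ℕ) : PowerSeries ℚ) with hB3def
  set E := PowerSeries.X + ((d+1 : ℕ) : PowerSeries ℚ) with hEdef
  have hA1 : Acoef (d+1) = (N * B1 * B2 * B3)^2 * (((Dn * E)^6))⁻¹ := by
    rw [Acoef, hnum, hden]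
  have hA0 : Acoef d = N^2 * ((Dn^6))⁻¹ := by rw [Acoef]
  rw [hA1, hA0]
  have hc1 : (Dn * E)^6 * (((Dn * E)^6))⁻¹ = 1 := by
    rw [show Dn * E = ∏ r ∈ Finset.Icc 1 (d+1), (PowerSeries.X + (r : PowerSeries ℚ)) from
      hden.symm]
    exact den_inv_cancel (d+1)
  have hc0 : Dn^6 * ((Dn^6))⁻¹ = 1 := den_inv_cancel d
  have hDEne : (Dn * E)^6 ≠ 0 := by
    rw [show Dn * E = ∏ r ∈ Finset.Icc 1 (d+1), (PowerSeries.X + (r : PowerSeries ℚ)) from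
      hden.symm]
    exact pow_ne_zero 6 (den_ne_zero (d+1))
  have hB3 : B3 = 3 * E := by
    rw [hEdef, hB3def]
    have h5 : ((3*d+3 : ℕ) : PowerSeries ℚ) = 3 * ((d+1 : ℕ) : PowerSeries ℚ) := by
      push_cast; ring
    rw [h5]; ring
  rw [hB3]
  exact ringaux N B1 B2 E Dn _ _ hc1 hc0 hDEne
    (fun a b h => mul_right_cancel₀ hDEne h)

noncomputable def seqOf (F : ℕ → PowerSeries ℚ) : ℕ → PowerSeries ℚ :=
  fun m => PowerSeries.mk fun d => PowerSeries.coeff m (F d)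

lemma Itil_eq_seqOf : Itil = seqOf Acoef := rfl

lemma coeff_X_mul' (f : PowerSeries ℚ) (n : ℕ) :
    PowerSeries.coeff n (PowerSeries.X * f)
      = if n = 0 then 0 else PowerSeries.coeff (n - 1) f := by
  cases n with
  | zero =>
    rw [if_pos rfl]
    simp [PowerSeries.coeff_zero_eq_constantCoeff, map_mul]
  | succ e =>
    rw [if_neg (Nat.succ_ne_zero e), mul_comm, PowerSeries.coeff_succ_mul_X]
    rfl

lemma bridge1 (F : ℕ → PowerSeries ℚ) :
    Tv (seqOf F) = seqOf (fun d => (PowerSeries.X + PowerSeries.C (d : ℚ)) * F d) := by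
  funext m
  ext d
  cases m with
  | zero =>
    simp [Tv, seqOf, shiftFun, zdz_coeff, coeff_X_mul', add_mul]
  | succ k =>
    simp [Tv, seqOf, shiftFun, zdz_coeff, coeff_X_mul', add_mul]
    rw [show ((d : ℕ) : PowerSeries ℚ) = PowerSeries.C ((d : ℕ) : ℚ) from
      (map_natCast (PowerSeries.C) d).symm, PowerSeries.coeff_C_mul]
    ring

lemma bridgeIter (F : ℕ → PowerSeries ℚ) (j : ℕ) :
    Tv^[j] (seqOf F) = seqOf (fun d =>
      (PowerSeries.X + PowerSeries.C (d : ℚ))^j * F d) := by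
  induction j with
  | zero => simp only [Function.iterate_zero, id_eq, pow_zero, one_mul]
  | succ j ih =>
    rw [Function.iterate_succ_apply', ih, bridge1]
    exact congrArg seqOf (funext fun d => by ring)

lemma keyfam (e : ℕ) :
    (PowerSeries.X + PowerSeries.C ((e : ℚ)+1))^4 * Acoef (e+1)
    = PowerSeries.C 729 * ((PowerSeries.X + PowerSeries.C (e : ℚ))^4 * Acoef e)
      + PowerSeries.C 1458 * ((PowerSeries.X + PowerSeries.C (e : ℚ))^3 * Acoef e)
      + PowerSeries.C 1053 * ((PowerSeries.X + PowerSeries.C (e : ℚ))^2 * Acoef e)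
      + PowerSeries.C 324 * ((PowerSeries.X + PowerSeries.C (e : ℚ)) * Acoef e)
      + PowerSeries.C 36 * Acoef e := by
  have h1 := Acoef_rec e
  push_cast at h1
  simp only [map_ofNat, map_add, map_one, map_natCast]
  linear_combination h1

lemma coeff_Cnum_X_mul (c : ℚ) (f : PowerSeries ℚ) (d : ℕ) :
    PowerSeries.coeff d ((PowerSeries.C c * PowerSeries.X) * f)
      = if d = 0 then 0 else c * PowerSeries.coeff (d-1) f := by
  rw [mul_assoc, PowerSeries.coeff_C_mul, coeff_X_mul']
  split_ifs
  · rw [mul_zero]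
  · rfl

lemma master (m : ℕ) :
    (1 - PowerSeries.C 729 * PowerSeries.X) * (Tv^[4] Itil) m
      - (PowerSeries.C 1458 * PowerSeries.X) * (Tv^[3] Itil) m
      - (PowerSeries.C 1053 * PowerSeries.X) * (Tv^[2] Itil) m
      - (PowerSeries.C 324 * PowerSeries.X) * (Tv Itil) m
      - (PowerSeries.C 36 * PowerSeries.X) * (Itil m)
    = eInd m := by
  have hT1 : Tv Itil = Tv^[1] Itil := rfl
  rw [hT1, Itil_eq_seqOf, bridgeIter, bridgeIter, bridgeIter, bridgeIter, sub_mul, one_mul]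
  ext d
  simp only [map_sub, coeff_Cnum_X_mul, seqOf, PowerSeries.coeff_mk]
  cases d with
  | zero =>
    simp only [if_pos rfl, sub_zero, Nat.cast_zero, map_zero, add_zero, Acoef_zero, mul_one]
    rw [PowerSeries.coeff_X_pow]
    by_cases hm : m = 4 <;> simp [eInd, hm]
  | succ e =>
    simp only [Nat.succ_ne_zero, if_false, Nat.add_sub_cancel]
    have hc : ((e+1 : ℕ) : ℚ) = (e : ℚ) + 1 := by push_cast; ring
    rw [hc, map_add, map_one]
    have hk := congrArg (PowerSeries.coeff m) (keyfam e)
    simp only [map_add, map_one, PowerSeries.coeff_C_mul] at hk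
    have hR : PowerSeries.coeff (e+1) (eInd m) = 0 := by
      by_cases hm : m = 4 <;> simp [eInd, hm, PowerSeries.coeff_one]
    rw [hR]
    rw [show (PowerSeries.X + PowerSeries.C ((e:ℚ))) ^ 1
      = PowerSeries.X + PowerSeries.C ((e:ℚ)) from pow_one _] 
    linear_combination hk

noncomputable def Lform : Polynomial (PowerSeries ℚ) :=
  Polynomial.C (1 - PowerSeries.C 729 * PowerSeries.X) * Polynomial.X^4
  - Polynomial.C (PowerSeries.C 1458 * PowerSeries.X) * Polynomial.X^3
  - Polynomial.C (PowerSeries.C 1053 * PowerSeries.X) * Polynomial.X^2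
  - Polynomial.C (PowerSeries.C 324 * PowerSeries.X) * Polynomial.X^1
  - Polynomial.C (PowerSeries.C 36 * PowerSeries.X)

lemma act_CmulXpow (a : PowerSeries ℚ) (j : ℕ) (f : Polynomial (PowerSeries ℚ)) :
    act (Polynomial.C a * Polynomial.X^j) f = Polynomial.C a * (deltaOp^[j] f) := by
  rw [Polynomial.C_mul_X_pow_eq_monomial, act_monomial]

lemma I0S_eq (q : ℕ) : I0S q = Jpoly Itil q := rfl

lemma act_Lform_I0S (q : ℕ) : act Lform (I0S q) = Jpoly eInd q := by
  rw [Lform, act_sub, act_sub, act_sub, act_sub, act_CmulXpow, act_CmulXpow, act_CmulXpow,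
    act_CmulXpow, act_C, I0S_eq, J1_iter, J1_iter, J1_iter, J1_iter, J2, J2, J2, J2, J2,
    Jsub, Jsub, Jsub, Jsub]
  have : (fun m => (1 - PowerSeries.C 729 * PowerSeries.X) * Tv^[4] Itil m
      - PowerSeries.C 1458 * PowerSeries.X * Tv^[3] Itil m
      - PowerSeries.C 1053 * PowerSeries.X * Tv^[2] Itil m
      - PowerSeries.C 324 * PowerSeries.X * Tv^[1] Itil m
      - PowerSeries.C 36 * PowerSeries.X * Itil m) = eInd := by
    funext m
    have := master m
    rw [show Tv^[1] Itil = Tv Itil from rfl]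
    linear_combination this
  rw [← this]

noncomputable def useq : ℕ → ℕ → PowerSeries ℚ
  | 0 => Itil
  | (p+1) => fun m => zdz (useq p (m+1) * (useq p 0)⁻¹) + useq p m * (useq p 0)⁻¹

noncomputable def gp (p : ℕ) : PowerSeries ℚ := (useq p 0)⁻¹

noncomputable def Mop : ℕ → Polynomial (PowerSeries ℚ)
  | 0 => 1
  | (p+1) => mapZ (Polynomial.C (gp p) * Mop p) + (Polynomial.C (gp p) * Mop p) * Polynomial.X

lemma useq_cc : ∀ p, PowerSeries.constantCoeff (useq p 0) = 1 := by
  intro p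
  induction p with
  | zero =>
    show PowerSeries.constantCoeff (Itil 0) = 1
    rw [← PowerSeries.coeff_zero_eq_constantCoeff]
    rw [Itil, PowerSeries.coeff_mk, Acoef_zero]
    simp
  | succ p ih =>
    show PowerSeries.constantCoeff
      (zdz (useq p 1 * (useq p 0)⁻¹) + useq p 0 * (useq p 0)⁻¹) = 1
    rw [map_add, zdz_constantCoeff, PowerSeries.mul_inv_cancel _ (by rw [ih]; norm_num),
      map_one, zero_add]

lemma useq_ne (p : ℕ) : useq p 0 ≠ 0 := by
  intro h
  have := useq_cc p
  rw [h, map_zero] at this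
  norm_num at this

lemma useq_mul_gp (p : ℕ) : useq p 0 * gp p = 1 :=
  PowerSeries.mul_inv_cancel _ (by rw [useq_cc p]; norm_num)

lemma act_Mop_succ (p : ℕ) (f : Polynomial (PowerSeries ℚ)) :
    act (Mop (p+1)) f = deltaOp (Polynomial.C (gp p) * act (Mop p) f) := by
  show act (mapZ (Polynomial.C (gp p) * Mop p) + (Polynomial.C (gp p) * Mop p) * Polynomial.X) f
    = _
  rw [act_add, ← delta_act, act_Cmul]

lemma K3 : ∀ p q, p ≤ q → act (Mop p) (I0S q) = Jpoly (useq p) (q - p) := by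
  intro p
  induction p with
  | zero =>
    intro q _
    show act 1 (I0S q) = _
    rw [act_one, I0S_eq, Nat.sub_zero]
    rfl
  | succ p ih =>
    intro q hq
    have hpq : p ≤ q := by omega
    rw [act_Mop_succ, ih q hpq, J2, J1]
    have h1 : q - p = (q - (p+1)) + 1 := by omega
    rw [h1]
    rw [Jdrop]
    · congr 1
      funext m
      show zdz (gp p * useq p (m+1)) + gp p * useq p m
        = zdz (useq p (m+1) * (useq p 0)⁻¹) + useq p m * (useq p 0)⁻¹
      rw [mul_comm (gp p), mul_comm (gp p)]
      rfl
    · show zdz (gp p * useq p 0) + shiftFun _ 0 = 0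
      rw [mul_comm, useq_mul_gp, zdz_one]
      show (0 : PowerSeries ℚ) + 0 = 0
      rw [add_zero]

lemma K4 (p : ℕ) : act (Mop p) (I0S p) = Polynomial.C (useq p 0) := by
  rw [K3 p p le_rfl, Nat.sub_self, Jpoly, Finset.sum_range_one]
  norm_num

lemma K5 : ∀ p q, p ≤ q → IPQ p q = act (Mop p) (I0S q) := by
  intro p
  induction p with
  | zero =>
    intro q _
    show I0S q = act 1 (I0S q)
    rw [act_one]
  | succ p ih =>
    intro q hq
    show deltaOp (IPQ p q * Polynomial.C (((IPQ p p).coeff 0)⁻¹)) = _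
    rw [ih q (by omega), ih p le_rfl, K4, Polynomial.coeff_C_zero, act_Mop_succ,
      mul_comm]
    rfl

lemma Z1 (p : ℕ) : act (Mop (p+1)) (I0S p) = 0 := by
  rw [act_Mop_succ, K4, ← Polynomial.C_mul, mul_comm, useq_mul_gp, Polynomial.C_1, deltaOp_one]

lemma Z2 (p q : ℕ) (h : act (Mop p) (I0S q) = 0) : act (Mop (p+1)) (I0S q) = 0 := by
  rw [act_Mop_succ, h, mul_zero, deltaOp_zero]

lemma Mop4_I0S_le3 (q : ℕ) (hq : q ≤ 3) : act (Mop 4) (I0S q) = 0 := by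
  interval_cases q
  · exact Z2 3 0 (Z2 2 0 (Z2 1 0 (Z1 0)))
  · exact Z2 3 1 (Z2 2 1 (Z1 1))
  · exact Z2 3 2 (Z1 2)
  · exact Z1 3

lemma mapZ_natDegree_le (P : Polynomial (PowerSeries ℚ)) : (mapZ P).natDegree ≤ P.natDegree := by
  rw [Polynomial.natDegree_le_iff_coeff_eq_zero]
  intro m hm
  rw [mapZ_coeff, Polynomial.coeff_eq_zero_of_natDegree_lt hm, zdz_zero]

lemma Mop_natDegree : ∀ p, (Mop p).natDegree ≤ p := by
  intro p
  induction p with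
  | zero => show (1 : Polynomial (PowerSeries ℚ)).natDegree ≤ 0; simp
  | succ p ih =>
    show (mapZ (Polynomial.C (gp p) * Mop p) + (Polynomial.C (gp p) * Mop p) * Polynomial.X).natDegree ≤ p+1
    have hQ : (Polynomial.C (gp p) * Mop p).natDegree ≤ p := by
      refine le_trans (Polynomial.natDegree_mul_le) ?_
      simp [Polynomial.natDegree_C, ih]
    refine le_trans (Polynomial.natDegree_add_le _ _) ?_
    refine max_le (le_trans (mapZ_natDegree_le _) (by omega)) ?_
    refine le_trans (Polynomial.natDegree_mul_le) ?_
    simp [Polynomial.natDegree_X]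
    omega

noncomputable def twP (g : PowerSeries ℚ) : ℕ → Polynomial (PowerSeries ℚ)
  | 0 => Polynomial.C g
  | (j+1) => mapZ (twP g j) + twP g j * Polynomial.X

lemma act_twP (g : PowerSeries ℚ) : ∀ j (h : Polynomial (PowerSeries ℚ)),
    act (twP g j) h = deltaOp^[j] (Polynomial.C g * h) := by
  intro j
  induction j with
  | zero => intro h; exact act_C g h
  | succ j ih =>
    intro h
    show act (mapZ (twP g j) + twP g j * Polynomial.X) h = _
    rw [act_add, ← delta_act, ih, Function.iterate_succ_apply']

lemma twP_natDegree (g : PowerSeries ℚ) : ∀ j, (twP g j).natDegree ≤ j := by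
  intro j
  induction j with
  | zero => show (Polynomial.C g).natDegree ≤ 0; simp
  | succ j ih =>
    show (mapZ (twP g j) + twP g j * Polynomial.X).natDegree ≤ j+1
    refine le_trans (Polynomial.natDegree_add_le _ _) ?_
    refine max_le (le_trans (mapZ_natDegree_le _) (by omega)) ?_
    refine le_trans (Polynomial.natDegree_mul_le) ?_
    simp [Polynomial.natDegree_X]
    omega

noncomputable def Qfor (g : PowerSeries ℚ) (P : Polynomial (PowerSeries ℚ)) :
    Polynomial (PowerSeries ℚ) :=
  P.sum fun j a => Polynomial.C a * twP g j

lemma act_sum {α : Type} (s : Finset α) (G : α → Polynomial (PowerSeries ℚ))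
    (f : Polynomial (PowerSeries ℚ)) :
    act (∑ i ∈ s, G i) f = ∑ i ∈ s, act (G i) f := by
  induction s using Finset.cons_induction with
  | empty => simp [act_zeroP]
  | cons a s ha ih => rw [Finset.sum_cons, Finset.sum_cons, act_add, ih]

lemma act_Qfor (g : PowerSeries ℚ) (P h : Polynomial (PowerSeries ℚ)) :
    act (Qfor g P) h = act P (Polynomial.C g * h) := by
  rw [Qfor, Polynomial.sum_def, act_sum]
  rw [show act P (Polynomial.C g * h)
    = P.sum fun j a => Polynomial.C a * (deltaOp^[j] (Polynomial.C g * h)) from rfl,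
    Polynomial.sum_def]
  apply Finset.sum_congr rfl
  intro j _
  rw [act_Cmul, act_twP]

lemma Qfor_natDegree (g : PowerSeries ℚ) (P : Polynomial (PowerSeries ℚ)) :
    (Qfor g P).natDegree ≤ P.natDegree := by
  rw [Polynomial.natDegree_le_iff_coeff_eq_zero]
  intro m hm
  rw [Qfor, Polynomial.sum_def, Polynomial.finset_sum_coeff]
  apply Finset.sum_eq_zero
  intro j hj
  rw [Polynomial.coeff_C_mul]
  have hjle : j ≤ P.natDegree := Polynomial.le_natDegree_of_mem_supp j hj
  rw [Polynomial.coeff_eq_zero_of_natDegree_lt (lt_of_le_of_lt (twP_natDegree g j) (by omega)),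
    mul_zero]

lemma desc : ∀ (k p : ℕ) (P : Polynomial (PowerSeries ℚ)), P.natDegree ≤ k →
    (∀ j, j ≤ k → act P (act (Mop p) (I0S (p+j))) = 0) →
    act P (act (Mop p) (I0S (p+k+1))) = 0 := by
  intro k
  induction k with
  | zero =>
    intro p P hdeg hkill
    have hP : P = Polynomial.C (P.coeff 0) := Polynomial.eq_C_of_natDegree_le_zero hdeg
    have h0 := hkill 0 le_rfl
    rw [Nat.add_zero, K4, hP, act_C, ← Polynomial.C_mul] at h0
    have : P.coeff 0 * useq p 0 = 0 := by
      have := Polynomial.C_eq_zero.mp h0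
      exact this
    have hc : P.coeff 0 = 0 := by
      rcases mul_eq_zero.mp this with h | h
      · exact h
      · exact absurd h (useq_ne p)
    rw [hP, hc, Polynomial.C_0, act_zeroP]
  | succ k ih =>
    intro p P hdeg hkill
    set Q := Qfor (useq p 0) P with hQdef
    have hQ0 : Q.coeff 0 = 0 := by
      have h1 : act Q 1 = 0 := by
        rw [hQdef, act_Qfor, mul_one, ← K4]
        have := hkill 0 (by omega)
        rw [Nat.add_zero] at this
        exact this
      rw [act_at_one] at h1
      exact Polynomial.C_eq_zero.mp h1
    obtain ⟨Q', hQ'⟩ := Polynomial.X_dvd_iff.mpr hQ0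
    have hswap : ∀ w : Polynomial (PowerSeries ℚ),
        act Q w = act Q' (deltaOp w) := by
      intro w
      rw [hQ', mul_comm, act_mulX]
    have hQ'deg : Q'.natDegree ≤ k := by
      by_cases hz : Q' = 0
      · rw [hz]; simp
      · have h1 : Q.natDegree = Q'.natDegree + 1 := by
          rw [hQ', Polynomial.natDegree_mul Polynomial.X_ne_zero hz, Polynomial.natDegree_X]
          omega
        have h2 : Q.natDegree ≤ k + 1 := le_trans (Qfor_natDegree _ _) hdeg
        omega
    have hunfold : ∀ r : ℕ, act Q' (act (Mop (p+1)) (I0S r)) = act P (act (Mop p) (I0S r)) := by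
      intro r
      rw [act_Mop_succ, ← hswap, hQdef, act_Qfor, ← mul_assoc, ← Polynomial.C_mul,
        useq_mul_gp, Polynomial.C_1, one_mul]
    have hkill' : ∀ j, j ≤ k → act Q' (act (Mop (p+1)) (I0S ((p+1)+j))) = 0 := by
      intro j hj
      rw [hunfold]
      have : (p+1)+j = p + (j+1) := by omega
      rw [this]
      exact hkill (j+1) (by omega)
    have := ih (p+1) Q' hQ'deg hkill'
    rw [hunfold] at this
    have heq : (p+1) + k + 1 = p + (k+1) + 1 := by omega
    rw [heq] at this
    exact this

lemma Mop_coeff_top : ∀ p, (Mop (p+1)).coeff (p+1) = gp p * (Mop p).coeff p := by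
  intro p
  show (mapZ (Polynomial.C (gp p) * Mop p) + (Polynomial.C (gp p) * Mop p) * Polynomial.X).coeff
    (p+1) = _
  rw [Polynomial.coeff_add, mapZ_coeff, Polynomial.coeff_mul_X, Polynomial.coeff_C_mul,
    Polynomial.coeff_C_mul,
    Polynomial.coeff_eq_zero_of_natDegree_lt (lt_of_le_of_lt (Mop_natDegree p) (by omega)),
    mul_zero, zdz_zero, zero_add]

lemma Mop4_coeff4 : (Mop 4).coeff 4 = gp 3 * (gp 2 * (gp 1 * (gp 0 * 1))) := by
  calc (Mop 4).coeff 4 = gp 3 * (Mop 3).coeff 3 := Mop_coeff_top 3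
    _ = gp 3 * (gp 2 * (Mop 2).coeff 2) := by
        rw [show (Mop 3).coeff 3 = gp 2 * (Mop 2).coeff 2 from Mop_coeff_top 2]
    _ = gp 3 * (gp 2 * (gp 1 * (Mop 1).coeff 1)) := by
        rw [show (Mop 2).coeff 2 = gp 1 * (Mop 1).coeff 1 from Mop_coeff_top 1]
    _ = gp 3 * (gp 2 * (gp 1 * (gp 0 * (Mop 0).coeff 0))) := by
        rw [show (Mop 1).coeff 1 = gp 0 * (Mop 0).coeff 0 from Mop_coeff_top 0]
    _ = gp 3 * (gp 2 * (gp 1 * (gp 0 * 1))) := by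
        rw [show Mop 0 = (1 : Polynomial (PowerSeries ℚ)) from rfl, Polynomial.coeff_one]
        norm_num

lemma coeff_CXpow (a : PowerSeries ℚ) (n m : ℕ) :
    (Polynomial.C a * Polynomial.X^n).coeff m = if m = n then a else 0 := by
  rw [Polynomial.coeff_C_mul, Polynomial.coeff_X_pow]
  split_ifs
  · rw [mul_one]
  · rw [mul_zero]

lemma Lform_coeff4 : Lform.coeff 4 = 1 - PowerSeries.C 729 * PowerSeries.X := by
  rw [Lform, Polynomial.coeff_sub, Polynomial.coeff_sub, Polynomial.coeff_sub,
    Polynomial.coeff_sub, coeff_CXpow, coeff_CXpow, coeff_CXpow, coeff_CXpow,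
    Polynomial.coeff_C]
  norm_num

lemma Lform_coeff_gt (m : ℕ) (hm : 4 < m) : Lform.coeff m = 0 := by
  rw [Lform, Polynomial.coeff_sub, Polynomial.coeff_sub, Polynomial.coeff_sub,
    Polynomial.coeff_sub, coeff_CXpow, coeff_CXpow, coeff_CXpow, coeff_CXpow,
    Polynomial.coeff_C]
  simp [show m ≠ 4 from by omega, show m ≠ 3 from by omega, show m ≠ 2 from by omega,
    show m ≠ 1 from by omega, show m ≠ 0 from by omega]

noncomputable def cN : PowerSeries ℚ :=
  (1 - PowerSeries.C 729 * PowerSeries.X) * (useq 0 0 * (useq 1 0 * (useq 2 0 * useq 3 0)))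

noncomputable def Nform : Polynomial (PowerSeries ℚ) := Polynomial.C cN * Mop 4

lemma Nform_coeff4 : Nform.coeff 4 = 1 - PowerSeries.C 729 * PowerSeries.X := by
  rw [Nform, Polynomial.coeff_C_mul, Mop4_coeff4, cN]
  have h : (1 - PowerSeries.C 729 * PowerSeries.X)
      * (useq 0 0 * (useq 1 0 * (useq 2 0 * useq 3 0)))
      * (gp 3 * (gp 2 * (gp 1 * (gp 0 * 1))))
      = (1 - PowerSeries.C 729 * PowerSeries.X)
        * ((useq 0 0 * gp 0) * ((useq 1 0 * gp 1) * ((useq 2 0 * gp 2) * (useq 3 0 * gp 3)))) := by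
    ring
  rw [h, useq_mul_gp, useq_mul_gp, useq_mul_gp, useq_mul_gp]
  ring

lemma Nform_coeff_gt (m : ℕ) (hm : 4 < m) : Nform.coeff m = 0 := by
  rw [Nform, Polynomial.coeff_C_mul,
    Polynomial.coeff_eq_zero_of_natDegree_lt (lt_of_le_of_lt (Mop_natDegree 4) hm), mul_zero]

noncomputable def Dform : Polynomial (PowerSeries ℚ) := Lform - Nform

lemma Dform_natDegree : Dform.natDegree ≤ 3 := by
  rw [Polynomial.natDegree_le_iff_coeff_eq_zero]
  intro m hm
  rw [Dform, Polynomial.coeff_sub]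
  rcases (by omega : m = 4 ∨ 4 < m) with h | h
  · rw [h, Lform_coeff4, Nform_coeff4, sub_self]
  · rw [Lform_coeff_gt m h, Nform_coeff_gt m h, sub_self]

lemma Dform_kills (j : ℕ) (hj : j ≤ 3) : act Dform (act (Mop 0) (I0S (0+j))) = 0 := by
  have h0 : act (Mop 0) (I0S (0+j)) = I0S j := by
    rw [Nat.zero_add]
    exact act_one _
  rw [h0, Dform, act_sub, Nform, act_Cmul, act_Lform_I0S, JeInd_le3 j hj,
    Mop4_I0S_le3 j hj, mul_zero, sub_zero]

lemma final_series : (1 - PowerSeries.C 729 * PowerSeries.X)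
    * (useq 0 0 * (useq 1 0 * (useq 2 0 * useq 3 0))) * useq 4 0 = 1 := by
  have hd := desc 3 0 Dform Dform_natDegree Dform_kills
  rw [show (0+3+1 : ℕ) = 4 from rfl] at hd
  have h0 : act (Mop 0) (I0S 4) = I0S 4 := act_one _
  rw [h0, Dform, act_sub, sub_eq_zero] at hd
  rw [act_Lform_I0S, JeInd_4, Nform, act_Cmul, K4] at hd
  rw [← Polynomial.C_mul, ← Polynomial.C_1] at hd
  have h2 := Polynomial.C_inj.mp hd
  unfold cN at h2
  exact h2.symm

/-- The product identity `(1 − 729·z)·I_{0,0}·I_{1,1}·I_{2,2}·I_{3,3}·I_{4,4} = 1`,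
i.e. `I_{0,0}·I_{1,1}·I_{2,2}·I_{3,3}·I_{4,4} = (1 − 3⁶·z)⁻¹`. -/
theorem IPQ_product_identity :
    (1 - 729 * Polynomial.C (PowerSeries.X : PowerSeries ℚ)) *
      IPQ 0 0 * IPQ 1 1 * IPQ 2 2 * IPQ 3 3 * IPQ 4 4 = 1 := by
  have hI : ∀ p, IPQ p p = Polynomial.C (useq p 0) := by
    intro p
    rw [K5 p p le_rfl, K4]
  rw [hI 0, hI 1, hI 2, hI 3, hI 4]
  have hC : (1 - 729 * Polynomial.C (PowerSeries.X : PowerSeries ℚ))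
      = Polynomial.C (1 - PowerSeries.C 729 * PowerSeries.X) := by
    rw [map_sub, map_one, map_mul]
    simp [map_ofNat]
  rw [hC, ← Polynomial.C_mul, ← Polynomial.C_mul, ← Polynomial.C_mul, ← Polynomial.C_mul,
    ← Polynomial.C_mul]
  rw [show (1 - PowerSeries.C 729 * PowerSeries.X) * useq 0 0 * useq 1 0 * useq 2 0
      * useq 3 0 * useq 4 0
    = (1 - PowerSeries.C 729 * PowerSeries.X)
      * (useq 0 0 * (useq 1 0 * (useq 2 0 * useq 3 0))) * useq 4 0 from by ring, final_series,
    Polynomial.C_1]
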